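/- Let Δ > 0, σ > 0, ε ≥ 0 and δ ∈ (0,1) satisfy the analytic-Gaussian condition Φ(Δ/(2σ) − εσ/Δ) − e^ε·Φ(−Δ/(2σ) − εσ/Δ) ≤ δ. Then for all a, b ∈ ℝ with |a − b| ≤ Δ, the probability that dpsign outputs +1 satisfies Φ(a/σ) ≤ e^ε · Φ(b/σ) + δ. -/

import Mathlib

open Real

/-- The cumulative distribution function of the standard normal distribution. -/
noncomputable def stdNormalCDF (x : ℝ) : ℝ :=
  ∫ t in Set.Iic x, (1 / Real.sqrt (2 * Real.pi)) * Real.exp (-(t ^ 2) / 2)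

noncomputable def stdNormalPDF (t : ℝ) : ℝ :=
  (1 / Real.sqrt (2 * Real.pi)) * Real.exp (-(t ^ 2) / 2)

lemma stdNormalPDF_pos (t : ℝ) : 0 < stdNormalPDF t := by
  unfold stdNormalPDF
  positivity

lemma stdNormalPDF_integrable : MeasureTheory.Integrable stdNormalPDF := by
  have h := (integrable_exp_neg_mul_sq (by norm_num : (0:ℝ) < 1/2)).const_mul
    (1 / Real.sqrt (2 * Real.pi))
  convert h using 2 with t
  unfold stdNormalPDF
  ring_nf

lemma stdNormalPDF_continuous : Continuous stdNormalPDF := by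
  unfold stdNormalPDF
  fun_prop

lemma hasDerivAt_stdNormalCDF (x : ℝ) : HasDerivAt stdNormalCDF (stdNormalPDF x) x := by
  have heq : stdNormalCDF = fun y => stdNormalCDF 0 + ∫ t in (0:ℝ)..y, stdNormalPDF t := by
    funext y
    have := intervalIntegral.integral_Iic_sub_Iic
      (stdNormalPDF_integrable.integrableOn (s := Set.Iic 0))
      (stdNormalPDF_integrable.integrableOn (s := Set.Iic y)) (μ := MeasureTheory.volume)
    unfold stdNormalCDF stdNormalPDF at *
    linarith
  rw [heq]
  exact (intervalIntegral.integral_hasDerivAt_right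
    (stdNormalPDF_integrable.intervalIntegrable)
    (stdNormalPDF_continuous.stronglyMeasurableAtFilter _ _)
    stdNormalPDF_continuous.continuousAt).const_add _

lemma stdNormalCDF_mono : StrictMono stdNormalCDF := by
  apply strictMono_of_deriv_pos
  intro x
  rw [(hasDerivAt_stdNormalCDF x).deriv]
  exact stdNormalPDF_pos x

/-- Under the analytic-Gaussian condition, the probability that the dpsign compressor
outputs `+1` satisfies the `(ε, δ)`-DP inequality. -/
theorem dpsign_plus_one_dp
    (Δ σ ε δ : ℝ) (hΔ : 0 < Δ) (hσ : 0 < σ) (hε : 0 ≤ ε) (hδ : δ ∈ Set.Ioo (0 : ℝ) 1)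
    (hAG : stdNormalCDF (Δ / (2 * σ) - ε * σ / Δ)
        - Real.exp ε * stdNormalCDF (-(Δ / (2 * σ)) - ε * σ / Δ) ≤ δ) :
    ∀ a b : ℝ, |a - b| ≤ Δ →
      stdNormalCDF (a / σ) ≤ Real.exp ε * stdNormalCDF (b / σ) + δ := by
  set c : ℝ := Δ / σ with hc
  have hcpos : 0 < c := div_pos hΔ hσ
  set u₀ : ℝ := -(c / 2) - ε / c with hu₀
  set g : ℝ → ℝ := fun u => stdNormalCDF (u + c) - Real.exp ε * stdNormalCDF u with hg
  have hderiv : ∀ u, HasDerivAt g (stdNormalPDF (u + c) - Real.exp ε * stdNormalPDF u) u := by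
    intro u
    have h1 : HasDerivAt (fun u : ℝ => stdNormalCDF (u + c)) (stdNormalPDF (u + c)) u := by
      have := (hasDerivAt_stdNormalCDF (u + c)).comp u ((hasDerivAt_id u).add_const c)
      rw [mul_one] at this
      exact this
    exact h1.sub ((hasDerivAt_stdNormalCDF u).const_mul _)
  have hgderiv : ∀ u, deriv g u = stdNormalPDF (u + c) - Real.exp ε * stdNormalPDF u :=
    fun u => (hderiv u).deriv
  have hdiff : Differentiable ℝ g := fun u => (hderiv u).differentiableAt
  -- sign of the derivative
  have hsign : ∀ u : ℝ, (0 ≤ deriv g u ↔ u ≤ u₀) := by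
    intro u
    rw [hgderiv, sub_nonneg]
    unfold stdNormalPDF
    rw [mul_comm (Real.exp ε), mul_assoc, ← Real.exp_add,
      mul_le_mul_iff_right₀ (by positivity : (0:ℝ) < 1 / Real.sqrt (2 * Real.pi)),
      Real.exp_le_exp]
    constructor
    · intro h
      rw [hu₀, ← mul_le_mul_iff_left₀ hcpos]
      have he : (-(c / 2) - ε / c) * c = -(c ^ 2 / 2) - ε := by field_simp
      rw [he]
      nlinarith
    · intro h
      rw [hu₀] at h
      have : u * c ≤ (-(c/2) - ε / c) * c := by
        exact mul_le_mul_of_nonneg_right h hcpos.le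
      rw [sub_mul, div_mul_cancel₀ _ hcpos.ne'] at this
      nlinarith
  have hmax : ∀ u : ℝ, g u ≤ g u₀ := by
    intro u
    rcases le_total u u₀ with h | h
    · have hmono : MonotoneOn g (Set.Iic u₀) := by
        apply monotoneOn_of_deriv_nonneg (convex_Iic u₀) hdiff.continuous.continuousOn
          (hdiff.differentiableOn)
        intro x hx
        rw [interior_Iic] at hx
        exact (hsign x).2 hx.out.le
      exact hmono h (Set.mem_Iic.2 le_rfl) h
    · have hanti : AntitoneOn g (Set.Ici u₀) := by
        apply antitoneOn_of_deriv_nonpos (convex_Ici u₀) hdiff.continuous.continuousOn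
          (hdiff.differentiableOn)
        intro x hx
        rw [interior_Ici] at hx
        have hx' : u₀ < x := hx
        by_contra h0
        push_neg at h0
        exact absurd ((hsign x).1 h0.le) (not_le.2 hx')
      exact hanti (Set.mem_Ici.2 le_rfl) h h
  have hgu₀ : g u₀ ≤ δ := by
    have h1 : u₀ + c = Δ / (2 * σ) - ε * σ / Δ := by
      rw [hu₀, hc]; field_simp; ring
    have h2 : u₀ = -(Δ / (2 * σ)) - ε * σ / Δ := by
      rw [hu₀, hc]; field_simp
    have := hAG
    rw [← h1, ← h2] at this
    exact this
  intro a b hab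
  have ha : a / σ ≤ b / σ + c := by
    rw [hc, ← add_div]
    have := abs_le.1 hab
    gcongr
    linarith
  have h1 : stdNormalCDF (a / σ) ≤ stdNormalCDF (b / σ + c) :=
    stdNormalCDF_mono.monotone ha
  have h2 : g (b / σ) ≤ δ := (hmax _).trans hgu₀
  rw [hg] at h2
  simp only at h2
  linarith
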